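/- Let A be a finite type and let φ, ψ ∈ EuclideanSpace ℂ A be unit vectors. On EuclideanSpace ℂ (Fin 2 × (A × A)) define the controlled-SWAP operator CSWAP by (CSWAP w)(0, x, y) = w(0, x, y) and (CSWAP w)(1, x, y) = w(1, y, x), and the Hadamard on the control qubit H₁ by (H₁ w)(c, x, y) = (w(0, x, y) + (−1)^c · w(1, x, y))/√2. Let v = H₁(CSWAP(H₁(e_0 ⊗ (φ ⊗ ψ)))). Then Σ_{(x,y) ∈ A × A} |v(1, x, y)|² = 1/2 − |⟨φ, ψ⟩|²/2. (Correctness of the swap test: measuring the control qubit of the swap-test circuit yields outcome 1 with probability 1/2 − |⟨φ|ψ⟩|²/2.) -/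

import Mathlib

/-- Pure tensor: `(u ⊗ w)(a, b) = u a * w b`. -/
def tens {A B : Type*} (u : EuclideanSpace ℂ A) (w : EuclideanSpace ℂ B) :
    EuclideanSpace ℂ (A × B) :=
  WithLp.toLp 2 fun p => u p.1 * w p.2

/-- Controlled-SWAP: `(CSWAP w)(0,x,y) = w(0,x,y)`,
`(CSWAP w)(1,x,y) = w(1,y,x)`. -/
def cswap {A : Type*} (w : EuclideanSpace ℂ (Fin 2 × (A × A))) :
    EuclideanSpace ℂ (Fin 2 × (A × A)) :=
  WithLp.toLp 2 fun p => if p.1 = 0 then w p else w (p.1, (p.2.2, p.2.1))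

/-- Hadamard on the control qubit:
`(H₁ w)(c, x, y) = (w(0,x,y) + (−1)^c · w(1,x,y))/√2`. -/
noncomputable def hadControl {A : Type*} (w : EuclideanSpace ℂ (Fin 2 × (A × A))) :
    EuclideanSpace ℂ (Fin 2 × (A × A)) :=
  WithLp.toLp 2 fun p => (w (0, p.2) + (-1 : ℂ) ^ (p.1 : ℕ) * w (1, p.2)) / (Real.sqrt 2 : ℂ)

/-- Correctness of the swap test: measuring the control qubit of the swap-test
circuit on input `|0⟩ ⊗ |φ⟩ ⊗ |ψ⟩` yields outcome `1` with probability
`1/2 − |⟨φ,ψ⟩|²/2`. -/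
theorem swap_test_correctness {A : Type*} [Fintype A] [DecidableEq A]
    (φ ψ : EuclideanSpace ℂ A) (hφ : ‖φ‖ = 1) (hψ : ‖ψ‖ = 1) :
    (∑ p : A × A, ‖
        ((hadControl (cswap (hadControl
          (tens (EuclideanSpace.single (0 : Fin 2) 1) (tens φ ψ))))) (1, p))‖ ^ 2) =
      1 / 2 - ‖(inner ℂ φ ψ : ℂ)‖ ^ 2 / 2 := by
  have hs2 : (Real.sqrt 2 : ℂ) * (Real.sqrt 2 : ℂ) = 2 := by
    rw [← Complex.ofReal_mul, Real.mul_self_sqrt (by norm_num)]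
    norm_num
  have hs0 : (Real.sqrt 2 : ℂ) ≠ 0 := by
    simpa using Real.sqrt_ne_zero'.2 (by norm_num : (0:ℝ) < 2)
  have key : ∀ p : A × A, (hadControl (cswap (hadControl
      (tens (EuclideanSpace.single (0 : Fin 2) 1) (tens φ ψ))))) (1, p) =
      (φ p.1 * ψ p.2 - φ p.2 * ψ p.1) / 2 := by
    intro p
    simp only [hadControl, cswap, tens, PiLp.toLp_apply, EuclideanSpace.single_apply]
    simp only [if_pos rfl, show ((1:Fin 2) = 0) = False by simp, if_false]
    norm_num
    rw [← sub_eq_add_neg, div_sub_div_same, div_div, hs2]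
  rw [Finset.sum_congr rfl (fun p _ => by rw [key p])]
  have hnorm : ∀ (u : EuclideanSpace ℂ A), ‖u‖ = 1 → ∑ x, Complex.normSq (u x) = 1 := by
    intro u hu
    have h : Real.sqrt (∑ x, ‖u x‖ ^ 2) = 1 := by
      rw [← EuclideanSpace.norm_eq]; exact hu
    have h2 := Real.sqrt_eq_one.mp h
    simpa [Complex.sq_norm] using h2
  have expand : ∀ p : A × A, ‖(φ p.1 * ψ p.2 - φ p.2 * ψ p.1) / 2‖ ^ 2 =
      (Complex.normSq (φ p.1 * ψ p.2) + Complex.normSq (φ p.2 * ψ p.1)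
        - 2 * (φ p.1 * ψ p.2 * (starRingEnd ℂ) (φ p.2 * ψ p.1)).re) / 4 := by
    intro p
    rw [Complex.sq_norm, map_div₀, Complex.normSq_sub]
    norm_num [Complex.normSq_apply]
  rw [Finset.sum_congr rfl (fun p _ => expand p)]
  rw [← Finset.sum_div, Finset.sum_sub_distrib, Finset.sum_add_distrib]
  have h1 : ∑ p : A × A, Complex.normSq (φ p.1 * ψ p.2) = 1 := by
    simp only [Fintype.sum_prod_type, map_mul, ← Finset.mul_sum, ← Finset.sum_mul,
      hnorm φ hφ, hnorm ψ hψ]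
    norm_num
  have h2 : ∑ p : A × A, Complex.normSq (φ p.2 * ψ p.1) = 1 := by
    simp only [Fintype.sum_prod_type, map_mul, ← Finset.mul_sum, ← Finset.sum_mul,
      hnorm φ hφ, hnorm ψ hψ]
    norm_num
  have h3 : ∑ p : A × A, (2 : ℝ) * (φ p.1 * ψ p.2 * (starRingEnd ℂ) (φ p.2 * ψ p.1)).re =
      2 * ‖(inner ℂ φ ψ : ℂ)‖ ^ 2 := by
    rw [← Finset.mul_sum, ← Complex.re_sum]
    have hz : ∑ p : A × A, (φ p.1 * ψ p.2 * (starRingEnd ℂ) (φ p.2 * ψ p.1)) =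
        (starRingEnd ℂ) (inner ℂ φ ψ : ℂ) * (inner ℂ φ ψ : ℂ) := by
      rw [Fintype.sum_prod_type]
      simp only [map_mul, PiLp.inner_apply, RCLike.inner_apply, map_sum, Finset.sum_mul,
        Finset.mul_sum]
      rw [Finset.sum_comm]
      congr 1; ext x; congr 1; ext y
      simp only [map_mul, RingHomCompTriple.comp_apply, RingHom.id_apply, Complex.conj_conj]
      ring
    have hre : ((starRingEnd ℂ) (inner ℂ φ ψ : ℂ) * (inner ℂ φ ψ : ℂ)).re =
        ‖(inner ℂ φ ψ : ℂ)‖ ^ 2 := by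
      rw [mul_comm, Complex.mul_conj]
      simp [Complex.normSq_eq_norm_sq, ← Complex.ofReal_pow]
    rw [hz, hre]
  rw [h1, h2, h3]
  have habs := norm_nonneg (inner ℂ φ ψ : ℂ)
  ring
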